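/- Let E ∈ ℝ^{(N-1)×(N-1)} be C-Metzler, a ∈ ℝ^{N-1}_{≥0}, f* = -E⁻¹a > 0 componentwise, g ∈ ℝ^{N-1}, and h = E⁻¹g. Define F(x) = gᵀ ln(f* + x h) on the open interval X = (L⁻, L⁺) where f* + x h > 0 componentwise. Then F is strictly decreasing on X; moreover F(x) → +∞ as x → (L⁻)⁺ and F(x) → -∞ as x → (L⁺)⁻. In particular, F has a unique zero in X. -/

import Mathlib

open Filter Topology

lemma aux_det_zero {N : ℕ} (E : Matrix (Fin N) (Fin N) ℝ) (S : Finset (Fin N))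
    (w : Fin N → ℝ) (i0 : Fin N) (hi0 : i0 ∈ S) (hw : w i0 ≠ 0)
    (hrow : ∀ i ∈ S, ∀ j ∉ S, E i j = 0)
    (hker : ∀ i ∈ S, ∑ j ∈ S, E i j * w j = 0) : E.det = 0 := by
  classical
  set M : Matrix {x // x ∈ S} {x // x ∈ S} ℝ := fun i j => E i j with hM
  have hdetM : M.det = 0 := by
    rw [← Matrix.exists_mulVec_eq_zero_iff]
    refine ⟨fun j => w j, ?_, ?_⟩
    · intro hzero
      exact hw (congrFun hzero ⟨i0, hi0⟩)
    · funext i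
      have : ∑ j : {x // x ∈ S}, E i j * w j = 0 := by
        rw [Finset.sum_coe_sort S (fun j => E i j * w j)]
        exact hker i i.2
      simpa [Matrix.mulVec, dotProduct, hM] using this
  obtain ⟨y, hy0, hyM⟩ := Matrix.exists_vecMul_eq_zero_iff.mpr hdetM
  rw [← Matrix.exists_vecMul_eq_zero_iff]
  set v : Fin N → ℝ := fun i => if h : i ∈ S then y ⟨i, h⟩ else 0 with hv
  refine ⟨v, ?_, ?_⟩
  · intro hzero
    apply hy0
    funext i
    have := congrFun hzero i.1
    simpa [hv, i.2] using this
  · funext j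
    have h1 : (Matrix.vecMul v E) j = ∑ i : {x // x ∈ S}, y i * E i j := by
      show ∑ i, v i * E i j = _
      calc ∑ i, v i * E i j = ∑ i ∈ S, v i * E i j := by
            refine (Finset.sum_subset (Finset.subset_univ S) ?_).symm
            intro i _ hiS
            simp [hv, hiS]
        _ = ∑ i : {x // x ∈ S}, v i.1 * E i.1 j :=
            (Finset.sum_coe_sort S (fun i => v i * E i j)).symm
        _ = ∑ i : {x // x ∈ S}, y i * E i j :=
            Finset.sum_congr rfl fun i _ => by simp [hv, i.2]
    rw [h1]
    by_cases hj : j ∈ S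
    · have := congrFun hyM ⟨j, hj⟩
      simpa [Matrix.vecMul, dotProduct, hM] using this
    · have : ∀ i : {x // x ∈ S}, y i * E i j = 0 := fun i => by
        rw [hrow i i.2 j hj, mul_zero]
      simp [this]

lemma aux_identity {N : ℕ} (E : Matrix (Fin N) (Fin N) ℝ) (a g fs h : Fin N → ℝ)
    (hEfs : E.mulVec fs = -a) (hEh : E.mulVec h = g)
    (t : ℝ) (ht : ∀ i, 0 < fs i + t * h i) :
    2 * (∑ i, g i * h i / (fs i + t * h i)) =
      t * (∑ i, g i * (h i / (fs i + t * h i)) ^ 2)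
      - ((∑ i, a i * (h i / (fs i + t * h i)) ^ 2)
        + (∑ i, (-(∑ k, E k i)) * ((fs i + t * h i) * (h i / (fs i + t * h i)) ^ 2))
        + ∑ i, ∑ j, E i j * ((fs j + t * h j) *
            ((h i / (fs i + t * h i)) - (h j / (fs j + t * h j))) ^ 2)) := by
  have hfne : ∀ i, (fs i + t * h i) ≠ 0 := fun i => ne_of_gt (ht i)
  have hg : ∀ i, g i = ∑ j, E i j * h j := by
    intro i; rw [← hEh]; simp [Matrix.mulVec, dotProduct]
  have ha' : ∀ i, a i = -∑ j, E i j * fs j := by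
    intro i
    have h2 := congrFun hEfs i
    simp [Matrix.mulVec, dotProduct] at h2
    linarith
  have hB : (∑ i, (-(∑ k, E k i)) * ((fs i + t * h i) * (h i / (fs i + t * h i)) ^ 2))
      = -∑ i, ∑ j, E i j * ((fs j + t * h j) * (h j / (fs j + t * h j)) ^ 2) := by
    have step1 : ∀ i, (-(∑ k, E k i)) * ((fs i + t * h i) * (h i / (fs i + t * h i)) ^ 2)
        = ∑ k, -(E k i * ((fs i + t * h i) * (h i / (fs i + t * h i)) ^ 2)) := by
      intro i
      rw [neg_mul, Finset.sum_mul]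
      rw [← Finset.sum_neg_distrib]
    rw [Finset.sum_congr rfl (fun i _ => step1 i), Finset.sum_comm]
    rw [← Finset.sum_neg_distrib]
    refine Finset.sum_congr rfl fun j _ => ?_
    rw [← Finset.sum_neg_distrib]
  rw [hB]
  have lhs_eq : 2 * (∑ i, g i * h i / (fs i + t * h i))
      = ∑ i, ∑ j, 2 * (E i j * h j * (h i / (fs i + t * h i))) := by
    rw [Finset.mul_sum]
    refine Finset.sum_congr rfl fun i _ => ?_
    rw [hg i, Finset.sum_mul, Finset.sum_div, Finset.mul_sum]
    refine Finset.sum_congr rfl fun j _ => ?_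
    ring
  have tS_eq : t * (∑ i, g i * (h i / (fs i + t * h i)) ^ 2)
      = ∑ i, ∑ j, E i j * (t * h j) * (h i / (fs i + t * h i)) ^ 2 := by
    rw [Finset.mul_sum]
    refine Finset.sum_congr rfl fun i _ => ?_
    rw [hg i, Finset.sum_mul, Finset.mul_sum]
    refine Finset.sum_congr rfl fun j _ => ?_
    ring
  have A_eq : (∑ i, a i * (h i / (fs i + t * h i)) ^ 2)
      = -∑ i, ∑ j, E i j * fs j * (h i / (fs i + t * h i)) ^ 2 := by
    rw [← Finset.sum_neg_distrib]
    refine Finset.sum_congr rfl fun i _ => ?_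
    rw [ha' i, neg_mul, Finset.sum_mul, ← Finset.sum_neg_distrib]
  rw [lhs_eq, tS_eq, A_eq]
  simp only [← Finset.sum_neg_distrib, ← Finset.sum_add_distrib, ← Finset.sum_sub_distrib]
  refine Finset.sum_congr rfl fun i _ => Finset.sum_congr rfl fun j _ => ?_
  have hfi := hfne i
  have hfj := hfne j
  generalize hA : fs i + t * h i = A at hfi ⊢
  generalize hB : fs j + t * h j = B at hfj ⊢
  have hfsj : fs j = B - t * h j := by rw [← hB]; ring
  rw [hfsj]
  field_simp
  ring

lemma aux_Q_pos {N : ℕ} (E : Matrix (Fin N) (Fin N) ℝ) (a g fs h : Fin N → ℝ)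
    (hoff : ∀ i j, i ≠ j → 0 ≤ E i j)
    (hcol : ∀ j, ∑ i, E i j ≤ 0)
    (ha : ∀ i, 0 ≤ a i)
    (hEfs : E.mulVec fs = -a) (hEh : E.mulVec h = g)
    (hgne : g ≠ 0)
    (t : ℝ) (hfspos : ∀ i, 0 < fs i) (ht : ∀ i, 0 < fs i + t * h i) :
    0 < (∑ i, a i * (h i / (fs i + t * h i)) ^ 2)
      + (∑ i, (-(∑ k, E k i)) * ((fs i + t * h i) * (h i / (fs i + t * h i)) ^ 2))
      + ∑ i, ∑ j, E i j * ((fs j + t * h j) *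
          ((h i / (fs i + t * h i)) - (h j / (fs j + t * h j))) ^ 2) := by
  have hfne : ∀ i, (fs i + t * h i) ≠ 0 := fun i => ne_of_gt (ht i)
  have hg : ∀ i, g i = ∑ j, E i j * h j := by
    intro i; rw [← hEh]; simp [Matrix.mulVec, dotProduct]
  have hT1 : ∀ i, 0 ≤ a i * (h i / (fs i + t * h i)) ^ 2 :=
    fun i => mul_nonneg (ha i) (sq_nonneg _)
  have hT2 : ∀ i, 0 ≤ (-(∑ k, E k i)) * ((fs i + t * h i) * (h i / (fs i + t * h i)) ^ 2) :=
    fun i => mul_nonneg (neg_nonneg.2 (hcol i))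
      (mul_nonneg (le_of_lt (ht i)) (sq_nonneg _))
  have hT3 : ∀ i j, 0 ≤ E i j * ((fs j + t * h j) *
      ((h i / (fs i + t * h i)) - (h j / (fs j + t * h j))) ^ 2) := by
    intro i j
    rcases eq_or_ne i j with rfl | hij
    · simp
    · exact mul_nonneg (hoff i j hij) (mul_nonneg (le_of_lt (ht j)) (sq_nonneg _))
  have hS1 : 0 ≤ ∑ i, a i * (h i / (fs i + t * h i)) ^ 2 :=
    Finset.sum_nonneg fun i _ => hT1 i
  have hS2 : 0 ≤ ∑ i, (-(∑ k, E k i)) * ((fs i + t * h i) * (h i / (fs i + t * h i)) ^ 2) :=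
    Finset.sum_nonneg fun i _ => hT2 i
  have hS3 : 0 ≤ ∑ i, ∑ j, E i j * ((fs j + t * h j) *
      ((h i / (fs i + t * h i)) - (h j / (fs j + t * h j))) ^ 2) :=
    Finset.sum_nonneg fun i _ => Finset.sum_nonneg fun j _ => hT3 i j
  rcases lt_or_eq_of_le (add_nonneg (add_nonneg hS1 hS2) hS3) with hlt | heq
  · exact hlt
  -- degenerate case: total = 0, derive g = 0, contradiction
  exfalso
  have hZ1 : ∑ i, a i * (h i / (fs i + t * h i)) ^ 2 = 0 := by linarith
  have hZ3 : ∑ i, ∑ j, E i j * ((fs j + t * h j) *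
      ((h i / (fs i + t * h i)) - (h j / (fs j + t * h j))) ^ 2) = 0 := by linarith
  have hZ1' : ∀ i, a i * (h i / (fs i + t * h i)) ^ 2 = 0 := by
    have := (Finset.sum_eq_zero_iff_of_nonneg (fun i _ => hT1 i)).1 hZ1
    exact fun i => this i (Finset.mem_univ i)
  have hZ3' : ∀ i j, E i j * ((fs j + t * h j) *
      ((h i / (fs i + t * h i)) - (h j / (fs j + t * h j))) ^ 2) = 0 := by
    have h1 := (Finset.sum_eq_zero_iff_of_nonneg (fun i (_ : i ∈ Finset.univ) =>
      Finset.sum_nonneg fun j _ => hT3 i j)).1 hZ3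
    intro i j
    have h2 := (Finset.sum_eq_zero_iff_of_nonneg (fun j (_ : j ∈ Finset.univ) => hT3 i j)).1
      (h1 i (Finset.mem_univ i))
    exact h2 j (Finset.mem_univ j)
  apply hgne
  funext i
  show g i = 0
  -- each term E i j * h j equals E i j * (fs j + t * h j) * u i
  have hterm : ∀ j, E i j * h j = E i j * (fs j + t * h j) * (h i / (fs i + t * h i)) := by
    intro j
    rcases eq_or_ne j i with rfl | hji
    · rw [mul_assoc, mul_div_cancel₀ _ (hfne j)]
    · have h3 := hZ3' i j
      rcases mul_eq_zero.1 h3 with hE0 | h4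
      · rw [hE0, zero_mul, zero_mul, zero_mul]
      · rcases mul_eq_zero.1 h4 with hf0 | h5
        · exact absurd hf0 (hfne j)
        · have h6 : h i / (fs i + t * h i) = h j / (fs j + t * h j) := by
            have := pow_eq_zero_iff (n := 2) (by norm_num) |>.1 h5
            linarith [sub_eq_zero.1 this]
          rw [h6, mul_assoc, mul_div_cancel₀ _ (hfne j)]
  have hsum : g i = (-(a i) + t * g i) * (h i / (fs i + t * h i)) := by
    have e1 : g i = ∑ j, E i j * (fs j + t * h j) * (h i / (fs i + t * h i)) := by
      rw [hg i]; exact Finset.sum_congr rfl fun j _ => hterm j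
    have e2 : ∑ j, E i j * (fs j + t * h j) = -(a i) + t * g i := by
      have e3 : ∑ j, E i j * (fs j + t * h j) = (∑ j, E i j * fs j) + t * ∑ j, E i j * h j := by
        rw [Finset.mul_sum, ← Finset.sum_add_distrib]
        exact Finset.sum_congr rfl fun j _ => by ring
      have e4 : (∑ j, E i j * fs j) = -(a i) := by
        have := congrFun hEfs i
        simpa [Matrix.mulVec, dotProduct] using this
      rw [e3, e4, ← hg i]
    calc g i = ∑ j, E i j * (fs j + t * h j) * (h i / (fs i + t * h i)) := e1
      _ = (∑ j, E i j * (fs j + t * h j)) * (h i / (fs i + t * h i)) :=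
          (Finset.sum_mul _ _ _).symm
      _ = (-(a i) + t * g i) * (h i / (fs i + t * h i)) := by rw [e2]
  have hai : a i * (h i / (fs i + t * h i)) = 0 := by
    rcases mul_eq_zero.1 (hZ1' i) with h0 | h0
    · rw [h0, zero_mul]
    · rw [pow_eq_zero_iff (n := 2) (by norm_num) |>.1 h0, mul_zero]
  have hkey : g i * (1 - t * (h i / (fs i + t * h i))) = 0 := by
    have := hsum
    nlinarith [this, hai]
  rcases mul_eq_zero.1 hkey with h0 | h0
  · exact h0
  · exfalso
    have : 1 - t * (h i / (fs i + t * h i)) = fs i / (fs i + t * h i) := by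
      rw [eq_div_iff (hfne i), sub_mul, one_mul, mul_assoc, div_mul_cancel₀ _ (hfne i)]
      ring
    rw [this] at h0
    have : 0 < fs i / (fs i + t * h i) := div_pos (hfspos i) (ht i)
    linarith

lemma aux_D_neg {N : ℕ} (E : Matrix (Fin N) (Fin N) ℝ) (a g fs h : Fin N → ℝ)
    (hoff : ∀ i j, i ≠ j → 0 ≤ E i j)
    (hcol : ∀ j, ∑ i, E i j ≤ 0)
    (ha : ∀ i, 0 ≤ a i)
    (hEfs : E.mulVec fs = -a) (hEh : E.mulVec h = g)
    (hgne : g ≠ 0) (hfspos : ∀ i, 0 < fs i)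
    (x : ℝ) (hx : ∀ i, 0 < fs i + x * h i) :
    ∑ i, g i * h i / (fs i + x * h i) < 0 := by
  -- positivity on the whole segment from 0 to x
  have hseg : ∀ t, min 0 x ≤ t → t ≤ max 0 x → ∀ i, 0 < fs i + t * h i := by
    intro t h1 h2 i
    rcases le_total 0 x with hx0 | hx0
    · rw [min_eq_left hx0] at h1; rw [max_eq_right hx0] at h2
      rcases le_total 0 (h i) with hh | hh
      · have : 0 ≤ t * h i := mul_nonneg h1 hh
        linarith [hfspos i]
      · have : x * h i ≤ t * h i := mul_le_mul_of_nonpos_right h2 hh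
        linarith [hx i]
    · rw [min_eq_right hx0] at h1; rw [max_eq_left hx0] at h2
      rcases le_total 0 (h i) with hh | hh
      · have : x * h i ≤ t * h i := mul_le_mul_of_nonneg_right h1 hh
        linarith [hx i]
      · have : 0 ≤ t * h i := by nlinarith
        linarith [hfspos i]
  set Dfun : ℝ → ℝ := fun t => ∑ i, g i * h i / (fs i + t * h i) with hDfun
  set Sfun : ℝ → ℝ := fun t => ∑ i, g i * (h i / (fs i + t * h i)) ^ 2 with hSfun
  set Qfun : ℝ → ℝ := fun t => (∑ i, a i * (h i / (fs i + t * h i)) ^ 2)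
      + (∑ i, (-(∑ k, E k i)) * ((fs i + t * h i) * (h i / (fs i + t * h i)) ^ 2))
      + ∑ i, ∑ j, E i j * ((fs j + t * h j) *
          ((h i / (fs i + t * h i)) - (h j / (fs j + t * h j))) ^ 2) with hQfun
  have hid : ∀ t, (∀ i, 0 < fs i + t * h i) → 2 * Dfun t = t * Sfun t - Qfun t :=
    fun t ht => aux_identity E a g fs h hEfs hEh t ht
  have hQ : ∀ t, (∀ i, 0 < fs i + t * h i) → 0 < Qfun t :=
    fun t ht => aux_Q_pos E a g fs h hoff hcol ha hEfs hEh hgne t hfspos ht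
  rcases eq_or_ne x 0 with rfl | hxne
  · have h1 := hid 0 hx
    have h2 := hQ 0 hx
    show Dfun 0 < 0
    rw [zero_mul] at h1
    linarith
  have hDeriv : ∀ t, (∀ i, 0 < fs i + t * h i) → HasDerivAt Dfun (-(Sfun t)) t := by
    intro t ht
    have hterm : ∀ i : Fin N, HasDerivAt (fun y : ℝ => g i * h i / (fs i + y * h i))
        (-(g i * (h i / (fs i + t * h i)) ^ 2)) t := by
      intro i
      have haff : HasDerivAt (fun y : ℝ => fs i + y * h i) (h i) t :=
        (hasDerivAt_mul_const (h i)).const_add (fs i)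
      have hne := ne_of_gt (ht i)
      have hdiv := (hasDerivAt_const t (g i * h i)).div haff hne
      refine hdiv.congr_deriv ?_
      field_simp
      ring
    have hsum := HasDerivAt.fun_sum (fun i (_ : i ∈ Finset.univ) => hterm i)
    have heq : ∑ i, -(g i * (h i / (fs i + t * h i)) ^ 2) = -(Sfun t) := by
      rw [hSfun]; exact Finset.sum_neg_distrib _
    rw [heq] at hsum
    exact hsum
  have hGDeriv : ∀ t, (∀ i, 0 < fs i + t * h i) →
      HasDerivAt (fun y => y ^ 2 * Dfun y) (-(t * Qfun t)) t := by
    intro t ht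
    have h2 : HasDerivAt (fun y => y ^ 2 * Dfun y)
        ((2 : ℝ) * t ^ 1 * Dfun t + t ^ 2 * (-(Sfun t))) t := by
      exact_mod_cast (hasDerivAt_pow 2 t).mul (hDeriv t ht)
    have h3 : (2 : ℝ) * t ^ 1 * Dfun t + t ^ 2 * (-(Sfun t)) = -(t * Qfun t) := by
      have h1 := hid t ht
      rw [pow_one]
      linear_combination t * h1
    rw [h3] at h2
    exact h2
  have hG0 : (fun y => y ^ 2 * Dfun y) 0 = 0 := by simp
  rcases lt_or_gt_of_ne hxne with hneg | hpos
  · -- x < 0 : G strictly increasing on [x,0]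
    have hmono : StrictMonoOn (fun y => y ^ 2 * Dfun y) (Set.Icc x 0) := by
      apply strictMonoOn_of_deriv_pos (convex_Icc x 0)
      · intro t htI
        have hts := hseg t (by rw [min_eq_right hneg.le]; exact htI.1)
          (by rw [max_eq_left hneg.le]; exact htI.2)
        exact (hGDeriv t hts).continuousAt.continuousWithinAt
      · intro t htI
        rw [interior_Icc] at htI
        have hts := hseg t (by rw [min_eq_right hneg.le]; exact htI.1.le)
          (by rw [max_eq_left hneg.le]; exact htI.2.le)
        rw [(hGDeriv t hts).deriv]
        have := hQ t hts
        nlinarith [htI.2]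
    have h4 := hmono (Set.left_mem_Icc.2 hneg.le) (Set.right_mem_Icc.2 hneg.le) hneg
    rw [hG0] at h4
    have h5 : x ^ 2 * Dfun x < 0 := h4
    have hx2 : 0 < x ^ 2 := by positivity
    show Dfun x < 0
    nlinarith [h5, hx2]
  · -- x > 0 : G strictly decreasing on [0,x]
    have hmono : StrictAntiOn (fun y => y ^ 2 * Dfun y) (Set.Icc 0 x) := by
      apply strictAntiOn_of_deriv_neg (convex_Icc 0 x)
      · intro t htI
        have hts := hseg t (by rw [min_eq_left hpos.le]; exact htI.1)
          (by rw [max_eq_right hpos.le]; exact htI.2)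
        exact (hGDeriv t hts).continuousAt.continuousWithinAt
      · intro t htI
        rw [interior_Icc] at htI
        have hts := hseg t (by rw [min_eq_left hpos.le]; exact htI.1.le)
          (by rw [max_eq_right hpos.le]; exact htI.2.le)
        rw [(hGDeriv t hts).deriv]
        have := hQ t hts
        nlinarith [htI.1]
    have h4 := hmono (Set.left_mem_Icc.2 hpos.le) (Set.right_mem_Icc.2 hpos.le) hpos
    rw [hG0] at h4
    have h5 : x ^ 2 * Dfun x < 0 := h4
    have hx2 : 0 < x ^ 2 := by positivity
    show Dfun x < 0
    nlinarith [h5, hx2]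

/-- Positivity of `b * ∑_{i ∈ V} g i` where `V` is the vanishing set at a finite endpoint. -/
lemma aux_cV {N : ℕ} (E : Matrix (Fin N) (Fin N) ℝ) (a g fs h : Fin N → ℝ)
    (hoff : ∀ i j, i ≠ j → 0 ≤ E i j)
    (hdet : E.det ≠ 0) (ha : ∀ i, 0 ≤ a i) (hfspos : ∀ i, 0 < fs i)
    (hEfs : E.mulVec fs = -a) (hEh : E.mulVec h = g)
    (b : ℝ) (hfb : ∀ i, 0 ≤ fs i + b * h i)
    (hVne : (Finset.univ.filter (fun i => fs i + b * h i = 0)).Nonempty) :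
    0 < b * ∑ i ∈ Finset.univ.filter (fun i => fs i + b * h i = 0), g i := by
  classical
  set V := Finset.univ.filter (fun i => fs i + b * h i = 0) with hV
  have hmemV : ∀ i, i ∈ V ↔ fs i + b * h i = 0 := by
    intro i; rw [hV, Finset.mem_filter]; simp
  have hnotV : ∀ j, j ∉ V → 0 < fs j + b * h j := by
    intro j hj
    rcases lt_or_eq_of_le (hfb j) with h1 | h1
    · exact h1
    · exact absurd ((hmemV j).2 h1.symm) hj
  have hgi : ∀ i, ∑ j, E i j * h j = g i := by
    intro i; rw [← hEh]; simp [Matrix.mulVec, dotProduct]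
  have hai : ∀ i, ∑ j, E i j * fs j = -(a i) := by
    intro i
    have := congrFun hEfs i
    simpa [Matrix.mulVec, dotProduct] using this
  have key : ∀ i, b * g i = (∑ j, E i j * (fs j + b * h j)) + a i := by
    intro i
    have e1 : ∑ j, E i j * (fs j + b * h j) = (∑ j, E i j * fs j) + b * ∑ j, E i j * h j := by
      rw [Finset.mul_sum, ← Finset.sum_add_distrib]
      exact Finset.sum_congr rfl fun j _ => by ring
    rw [e1, hai i, hgi i]; ring
  have hsum : b * ∑ i ∈ V, g i
      = (∑ i ∈ V, ∑ j, E i j * (fs j + b * h j)) + ∑ i ∈ V, a i := by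
    rw [Finset.mul_sum, ← Finset.sum_add_distrib]
    exact Finset.sum_congr rfl fun i _ => key i
  have hinner : ∀ i ∈ V, 0 ≤ ∑ j, E i j * (fs j + b * h j) := by
    intro i hi
    refine Finset.sum_nonneg fun j _ => ?_
    by_cases hj : j ∈ V
    · rw [(hmemV j).1 hj, mul_zero]
    · have hij : i ≠ j := fun hEq => hj (hEq ▸ hi)
      exact mul_nonneg (hoff i j hij) (hfb j)
  have h1 : 0 ≤ ∑ i ∈ V, ∑ j, E i j * (fs j + b * h j) :=
    Finset.sum_nonneg fun i hi => hinner i hi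
  have h2 : 0 ≤ ∑ i ∈ V, a i := Finset.sum_nonneg fun i _ => ha i
  have hge : 0 ≤ b * ∑ i ∈ V, g i := by rw [hsum]; linarith
  rcases lt_or_eq_of_le hge with hlt | heq
  · exact hlt
  exfalso
  have heq' : (∑ i ∈ V, ∑ j, E i j * (fs j + b * h j)) + ∑ i ∈ V, a i = 0 := by
    rw [← hsum, ← heq]
  -- degenerate: apply the determinant lemma
  have hz1 : ∑ i ∈ V, ∑ j, E i j * (fs j + b * h j) = 0 := by linarith
  have hz1' : ∀ i ∈ V, ∑ j, E i j * (fs j + b * h j) = 0 := by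
    intro i hi
    have := (Finset.sum_eq_zero_iff_of_nonneg (fun i hi => hinner i hi)).1 hz1
    exact this i hi
  have hz1'' : ∀ i ∈ V, ∀ j, E i j * (fs j + b * h j) = 0 := by
    intro i hi j
    have hterm : ∀ j ∈ Finset.univ, 0 ≤ E i j * (fs j + b * h j) := by
      intro j _
      by_cases hj : j ∈ V
      · rw [(hmemV j).1 hj, mul_zero]
      · exact mul_nonneg (hoff i j (fun hEq => hj (hEq ▸ hi))) (hfb j)
    exact (Finset.sum_eq_zero_iff_of_nonneg hterm).1 (hz1' i hi) j (Finset.mem_univ j)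
  have hrow : ∀ i ∈ V, ∀ j, j ∉ V → E i j = 0 := by
    intro i hi j hj
    rcases mul_eq_zero.1 (hz1'' i hi j) with h0 | h0
    · exact h0
    · exact absurd h0 (ne_of_gt (hnotV j hj))
  obtain ⟨i0, hi0⟩ := hVne
  apply hdet
  refine aux_det_zero E V fs i0 hi0 (ne_of_gt (hfspos i0)) hrow ?_
  intro i hi
  have : ∑ j ∈ V, E i j * fs j = ∑ j, E i j * fs j := by
    refine Finset.sum_subset (Finset.subset_univ V) ?_
    intro j _ hj
    rw [hrow i hi j hj, zero_mul]
  rw [this, hai i]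
  -- a i = 0 from degeneracy
  have hza : ∑ i ∈ V, a i = 0 := by linarith
  have := (Finset.sum_eq_zero_iff_of_nonneg (fun i _ => ha i)).1 hza i hi
  rw [this, neg_zero]

/-- Negativity of `∑_{i ∈ P} g i` where `P = {i | 0 < h i}` when `h ≥ 0`. -/
lemma aux_cP {N : ℕ} (E : Matrix (Fin N) (Fin N) ℝ) (g h : Fin N → ℝ)
    (hoff : ∀ i j, i ≠ j → 0 ≤ E i j)
    (hcol : ∀ j, ∑ i, E i j ≤ 0)
    (hdet : E.det ≠ 0)
    (hEh : E.mulVec h = g)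
    (hsign : ∀ i, 0 ≤ h i)
    (hPne : (Finset.univ.filter (fun i => 0 < h i)).Nonempty) :
    ∑ i ∈ Finset.univ.filter (fun i => 0 < h i), g i < 0 := by
  classical
  set P := Finset.univ.filter (fun i => 0 < h i) with hP
  have hmemP : ∀ i, i ∈ P ↔ 0 < h i := by
    intro i; rw [hP, Finset.mem_filter]; simp
  have hnotP : ∀ j, j ∉ P → h j = 0 := by
    intro j hj
    rcases lt_or_eq_of_le (hsign j) with h1 | h1
    · exact absurd ((hmemP j).2 h1) hj
    · exact h1.symm
  have hgi : ∀ i, ∑ j, E i j * h j = g i := by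
    intro i; rw [← hEh]; simp [Matrix.mulVec, dotProduct]
  have hsum : ∑ i ∈ P, g i = ∑ j ∈ P, (∑ i ∈ P, E i j) * h j := by
    calc ∑ i ∈ P, g i = ∑ i ∈ P, ∑ j, E i j * h j :=
          Finset.sum_congr rfl fun i _ => (hgi i).symm
      _ = ∑ i ∈ P, ∑ j ∈ P, E i j * h j := by
          refine Finset.sum_congr rfl fun i _ => ?_
          refine (Finset.sum_subset (Finset.subset_univ P) ?_).symm
          intro j _ hj
          rw [hnotP j hj, mul_zero]
      _ = ∑ j ∈ P, ∑ i ∈ P, E i j * h j := Finset.sum_comm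
      _ = ∑ j ∈ P, (∑ i ∈ P, E i j) * h j :=
          Finset.sum_congr rfl fun j _ => (Finset.sum_mul _ _ _).symm
  have hcolP : ∀ j ∈ P, ∑ i ∈ P, E i j ≤ 0 := by
    intro j hj
    have hsplit : ∑ i ∈ P, E i j ≤ ∑ i, E i j := by
      refine Finset.sum_le_sum_of_subset_of_nonneg (Finset.subset_univ P) ?_
      intro i _ hi
      exact hoff i j (fun hEq => hi (hEq ▸ hj))
    exact le_trans hsplit (hcol j)
  have hterm : ∀ j ∈ P, (∑ i ∈ P, E i j) * h j ≤ 0 :=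
    fun j hj => mul_nonpos_of_nonpos_of_nonneg (hcolP j hj) (hsign j)
  have hle : ∑ i ∈ P, g i ≤ 0 := by
    rw [hsum]; exact Finset.sum_nonpos hterm
  rcases lt_or_eq_of_le hle with hlt | heq
  · exact hlt
  exfalso
  have hz : ∀ j ∈ P, (∑ i ∈ P, E i j) * h j = 0 := by
    intro j hj
    have hnn : ∀ j ∈ P, 0 ≤ -((∑ i ∈ P, E i j) * h j) := fun j hj => neg_nonneg.2 (hterm j hj)
    have hz0 : ∑ j ∈ P, -((∑ i ∈ P, E i j) * h j) = 0 := by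
      rw [Finset.sum_neg_distrib, ← hsum, heq, neg_zero]
    have := (Finset.sum_eq_zero_iff_of_nonneg hnn).1 hz0 j hj
    linarith
  have hcolz : ∀ j ∈ P, ∑ i ∈ P, E i j = 0 := by
    intro j hj
    rcases mul_eq_zero.1 (hz j hj) with h0 | h0
    · exact h0
    · exact absurd h0 (ne_of_gt ((hmemP j).1 hj))
  -- off-block entries vanish
  have hColSplit : ∀ j ∈ P, ∀ i, i ∉ P → E i j = 0 := by
    intro j hj i hi
    have h1 : ∑ i ∈ P, E i j + ∑ i ∈ Finset.univ \ P, E i j = ∑ i, E i j := by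
      rw [add_comm]; exact Finset.sum_sdiff (Finset.subset_univ P)
    have h2 : 0 ≤ ∑ i ∈ Finset.univ \ P, E i j :=
      Finset.sum_nonneg fun i hi' => hoff i j
        (fun hEq => ((Finset.mem_sdiff.1 hi').2) (hEq ▸ hj))
    have h3 : ∑ i ∈ Finset.univ \ P, E i j ≤ 0 := by
      have := hcol j
      rw [← h1, hcolz j hj, zero_add] at this
      exact this
    have h4 : ∑ i ∈ Finset.univ \ P, E i j = 0 := le_antisymm h3 h2
    have := (Finset.sum_eq_zero_iff_of_nonneg (fun i hi' => hoff i j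
      (fun hEq => ((Finset.mem_sdiff.1 hi').2) (hEq ▸ hj)))).1 h4 i
      (Finset.mem_sdiff.2 ⟨Finset.mem_univ i, hi⟩)
    exact this
  obtain ⟨j0, hj0⟩ := hPne
  apply hdet
  have hdetT : E.transpose.det = 0 := by
    refine aux_det_zero E.transpose P (fun _ => 1) j0 hj0 one_ne_zero ?_ ?_
    · intro j hj i hi
      exact hColSplit j hj i hi
    · intro j hj
      simp only [Matrix.transpose_apply, mul_one]
      exact hcolz j hj
  rwa [Matrix.det_transpose] at hdetT

/-- Monotonicity of the feasibility function `F(x) = gᵀ ln(f* + x h)` on the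
maximal positivity interval `X`, with `F → +∞` at the left endpoint (or at `-∞`
when the interval is unbounded below), `F → -∞` at the right endpoint (or at
`+∞`), and existence of a unique zero of `F` in `X`. -/
theorem feasibility_function_monotone {N : ℕ}
    (E : Matrix (Fin N) (Fin N) ℝ) (a g fs h : Fin N → ℝ)
    (hoff : ∀ i j, i ≠ j → 0 ≤ E i j)
    (hdiag : ∀ i, E i i < 0)
    (hcol : ∀ j, ∑ i, E i j ≤ 0)
    (hdet : E.det ≠ 0)
    (ha : ∀ i, 0 ≤ a i)
    (hfs : fs = -(E⁻¹.mulVec a)) (hfspos : ∀ i, 0 < fs i)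
    (hh : h = E⁻¹.mulVec g) (hhne : h ≠ 0)
    (X : Set ℝ) (hX : X = {x : ℝ | ∀ i, 0 < fs i + x * h i})
    (F : ℝ → ℝ) (hF : ∀ x, F x = ∑ i, g i * Real.log (fs i + x * h i)) :
    StrictAntiOn F X ∧
    (BddBelow X → Tendsto F (𝓝[>] (sInf X)) atTop) ∧
    (¬ BddBelow X → Tendsto F atBot atTop) ∧
    (BddAbove X → Tendsto F (𝓝[<] (sSup X)) atBot) ∧
    (¬ BddAbove X → Tendsto F atTop atBot) ∧
    (∃! x : ℝ, x ∈ X ∧ F x = 0) := by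
  classical
  have hdetunit : IsUnit E.det := isUnit_iff_ne_zero.2 hdet
  have hEfs : E.mulVec fs = -a := by
    rw [hfs, Matrix.mulVec_neg, Matrix.mulVec_mulVec, Matrix.mul_nonsing_inv _ hdetunit,
      Matrix.one_mulVec]
  have hEh : E.mulVec h = g := by
    rw [hh, Matrix.mulVec_mulVec, Matrix.mul_nonsing_inv _ hdetunit, Matrix.one_mulVec]
  have hgne : g ≠ 0 := by
    intro hg0
    apply hhne
    rw [hh, hg0, Matrix.mulVec_zero]
  have hXmem : ∀ x, x ∈ X ↔ ∀ i, 0 < fs i + x * h i := by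
    intro x; rw [hX]; rfl
  have h0X : (0 : ℝ) ∈ X := by
    rw [hXmem]; intro i; simpa using hfspos i
  have hXne : X.Nonempty := ⟨0, h0X⟩
  have hXconv : Convex ℝ X := by
    intro x hxX y hyX α β hα hβ hαβ
    rw [hXmem] at *
    intro i
    have hA := hxX i
    have hB := hyX i
    show 0 < fs i + (α * x + β * y) * h i
    have e : fs i + (α * x + β * y) * h i
        = α * (fs i + x * h i) + β * (fs i + y * h i) := by
      linear_combination (-(fs i)) * hαβ
    rw [e]
    rcases eq_or_lt_of_le hα with h1 | h1
    · have hβ1 : β = 1 := by linarith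
      rw [← h1, hβ1]; simpa using hB
    · have := mul_pos h1 hA
      have := mul_nonneg hβ hB.le
      linarith
  have hXord : X.OrdConnected := hXconv.ordConnected
  have hXopen : IsOpen X := by
    have e : X = ⋂ i, {x : ℝ | 0 < fs i + x * h i} := by
      rw [hX]; ext x; simp [Set.mem_iInter]
    rw [e]
    exact isOpen_iInter_of_finite fun i =>
      isOpen_lt continuous_const (continuous_const.add (continuous_id.mul continuous_const))
  have hFd : ∀ x ∈ X, HasDerivAt F (∑ i, g i * h i / (fs i + x * h i)) x := by
    intro x hx
    rw [hXmem] at hx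
    have hterm : ∀ i : Fin N, HasDerivAt (fun y : ℝ => g i * Real.log (fs i + y * h i))
        (g i * h i / (fs i + x * h i)) x := by
      intro i
      have haff : HasDerivAt (fun y : ℝ => fs i + y * h i) (h i) x :=
        (hasDerivAt_mul_const (h i)).const_add (fs i)
      have hlog := haff.log (ne_of_gt (hx i))
      have := hlog.const_mul (g i)
      rw [mul_div_assoc]
      exact this
    have hsum := HasDerivAt.fun_sum (fun i (_ : i ∈ Finset.univ) => hterm i)
    have hFeq : F = fun y => ∑ i, g i * Real.log (fs i + y * h i) := funext hF
    rw [hFeq]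
    exact hsum
  have hDneg : ∀ x ∈ X, ∑ i, g i * h i / (fs i + x * h i) < 0 := by
    intro x hx
    rw [hXmem] at hx
    exact aux_D_neg E a g fs h hoff hcol ha hEfs hEh hgne hfspos x hx
  have hanti : StrictAntiOn F X := by
    apply strictAntiOn_of_deriv_neg hXconv
    · exact fun x hx => (hFd x hx).continuousAt.continuousWithinAt
    · rw [hXopen.interior_eq]
      intro x hx
      rw [(hFd x hx).deriv]
      exact hDneg x hx
  -- the four limit statements
  have limB : BddBelow X → Tendsto F (𝓝[>] (sInf X)) atTop := by
    intro hB
    set l := sInf X with hl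
    have hlnotX : l ∉ X := by
      intro hmem
      obtain ⟨ε, hε, hball⟩ := Metric.isOpen_iff.1 hXopen _ hmem
      have hmem2 : l - ε / 2 ∈ X := by
        apply hball
        rw [Metric.mem_ball, Real.dist_eq, abs_of_nonpos (by linarith)]
        linarith
      have := csInf_le hB hmem2
      linarith
    have hl0 : l < 0 := by
      rcases lt_or_eq_of_le (csInf_le hB h0X) with h1 | h1
      · exact h1
      · exact absurd (show l ∈ X from by rw [hl, h1]; exact h0X) hlnotX
    have hIooX : Set.Ioo l 0 ⊆ X := by
      intro x hx
      obtain ⟨y, hyX, hyx⟩ := exists_lt_of_csInf_lt hXne hx.1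
      exact hXord.out hyX h0X ⟨hyx.le, hx.2.le⟩
    have hfl : ∀ i, 0 ≤ fs i + l * h i := by
      intro i
      by_contra hneg
      push_neg at hneg
      have hhi : 0 < h i := by nlinarith [hfspos i]
      set c := fs i + l * h i with hc
      set δ := min (-c / (2 * h i)) (-l / 2) with hδ
      have hδ1 : 0 < -c / (2 * h i) := div_pos (by linarith) (by linarith)
      have hδpos : 0 < δ := lt_min hδ1 (by linarith)
      have hδb : δ ≤ -l / 2 := min_le_right _ _
      have hxmem : l + δ ∈ Set.Ioo l 0 := ⟨by linarith, by linarith⟩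
      have hpos := (hXmem _).1 (hIooX hxmem) i
      have h1 : δ ≤ -c / (2 * h i) := min_le_left _ _
      have h2 : δ * h i ≤ -c / (2 * h i) * h i :=
        mul_le_mul_of_nonneg_right h1 hhi.le
      have h3 : -c / (2 * h i) * h i = -c / 2 := by
        field_simp [hhi.ne']
      nlinarith [hpos]
    set V := Finset.univ.filter (fun i => fs i + l * h i = 0) with hV
    have hVne : V.Nonempty := by
      by_contra hemp
      rw [Finset.not_nonempty_iff_eq_empty, Finset.filter_eq_empty_iff] at hemp
      apply hlnotX
      rw [hXmem]
      intro i
      exact lt_of_le_of_ne (hfl i) (Ne.symm (hemp (Finset.mem_univ i)))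
    have hcV : ∑ i ∈ V, g i < 0 := by
      have hbc := aux_cV E a g fs h hoff hdet ha hfspos hEfs hEh l hfl hVne
      by_contra hle
      push_neg at hle
      nlinarith
    have hhV : ∀ i ∈ V, 0 < h i := by
      intro i hi
      have hzero := (Finset.mem_filter.1 hi).2
      nlinarith [hfspos i]
    have hform : ∀ x ∈ Set.Ioo l 0, F x = (∑ i ∈ V, g i) * Real.log (x - l)
        + ((∑ i ∈ V, g i * Real.log (h i))
          + ∑ i ∈ Finset.univ \ V, g i * Real.log (fs i + x * h i)) := by
      intro x hx
      rw [hF x, ← Finset.sum_sdiff (Finset.subset_univ V)]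
      have hVpart : ∑ i ∈ V, g i * Real.log (fs i + x * h i)
          = (∑ i ∈ V, g i) * Real.log (x - l) + ∑ i ∈ V, g i * Real.log (h i) := by
        rw [Finset.sum_mul, ← Finset.sum_add_distrib]
        refine Finset.sum_congr rfl fun i hi => ?_
        have hzero := (Finset.mem_filter.1 hi).2
        have hhi := hhV i hi
        have heq : fs i + x * h i = (x - l) * h i := by linear_combination hzero
        rw [heq, Real.log_mul (ne_of_gt (by linarith [hx.1])) (ne_of_gt hhi)]
        ring
      rw [hVpart]
      ring
    have t1 : Tendsto (fun x => x - l) (𝓝[>] l) (𝓝[>] 0) := by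
      apply tendsto_nhdsWithin_of_tendsto_nhds_of_eventually_within
      · have hc : Tendsto (fun x : ℝ => x - l) (𝓝 l) (𝓝 (l - l)) :=
          (continuous_id.sub continuous_const).tendsto l
        rw [sub_self] at hc
        exact hc.mono_left nhdsWithin_le_nhds
      · filter_upwards [eventually_mem_nhdsWithin] with x hx
        exact sub_pos.2 (Set.mem_Ioi.1 hx)
    have t2 : Tendsto (fun x => (∑ i ∈ V, g i) * Real.log (x - l)) (𝓝[>] l) atTop :=
      Tendsto.const_mul_atBot_of_neg hcV (Real.tendsto_log_nhdsGT_zero.comp t1)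
    have t3 : Tendsto (fun x => (∑ i ∈ V, g i * Real.log (h i))
        + ∑ i ∈ Finset.univ \ V, g i * Real.log (fs i + x * h i)) (𝓝[>] l)
        (𝓝 ((∑ i ∈ V, g i * Real.log (h i))
          + ∑ i ∈ Finset.univ \ V, g i * Real.log (fs i + l * h i))) := by
      apply Tendsto.const_add
      apply tendsto_finset_sum
      intro i hi
      have hiV : i ∉ V := (Finset.mem_sdiff.1 hi).2
      have hpos : 0 < fs i + l * h i := by
        refine lt_of_le_of_ne (hfl i) (Ne.symm fun hEq => hiV ?_)
        rw [hV, Finset.mem_filter]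
        exact ⟨Finset.mem_univ i, hEq⟩
      have haff : Tendsto (fun x : ℝ => fs i + x * h i) (𝓝[>] l) (𝓝 (fs i + l * h i)) :=
        ((continuous_const.add (continuous_id.mul continuous_const)).tendsto l).mono_left
          nhdsWithin_le_nhds
      exact ((Real.continuousAt_log (ne_of_gt hpos)).tendsto.comp haff).const_mul (g i)
    refine Tendsto.congr' ?_ (Tendsto.atTop_add t2 t3)
    filter_upwards [Ioo_mem_nhdsGT_of_mem ⟨le_refl l, hl0⟩] with x hx
    exact (hform x hx).symm
  have limNB : ¬ BddBelow X → Tendsto F atBot atTop := by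
    intro hB
    have hsign : ∀ i, h i ≤ 0 := by
      intro i
      by_contra hneg
      push_neg at hneg
      apply hB
      refine ⟨-(fs i) / h i, ?_⟩
      intro x hxX
      have hp := (hXmem x).1 hxX i
      rw [div_le_iff₀ hneg]
      nlinarith
    have hEh' : E.mulVec (-h) = -g := by rw [Matrix.mulVec_neg, hEh]
    have hsign' : ∀ i, 0 ≤ (-h) i := by
      intro i
      simpa using hsign i
    have hPne' : (Finset.univ.filter (fun i => 0 < (-h) i)).Nonempty := by
      by_contra hemp
      rw [Finset.not_nonempty_iff_eq_empty, Finset.filter_eq_empty_iff] at hemp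
      apply hhne
      funext i
      have h1 := hemp (Finset.mem_univ i)
      have h2 := hsign i
      show h i = 0
      simp only [Pi.neg_apply, neg_pos] at h1
      linarith
    have hcP' := aux_cP E (-g) (-h) hoff hcol hdet hEh' hsign' hPne'
    set Nset := Finset.univ.filter (fun i => h i < 0) with hNset
    have hfilter : Finset.univ.filter (fun i => 0 < (-h) i) = Nset := by
      rw [hNset]
      refine Finset.filter_congr fun i _ => ?_
      simp [neg_pos]
    rw [hfilter] at hcP'
    have hcN : 0 < ∑ i ∈ Nset, g i := by
      have : ∑ i ∈ Nset, (-g) i = -∑ i ∈ Nset, g i := by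
        simp [Finset.sum_neg_distrib]
      rw [this] at hcP'
      linarith
    have hNne : Nset.Nonempty := by
      rw [← hfilter]
      exact hPne'
    have hh0 : ∀ i, i ∉ Nset → h i = 0 := by
      intro i hi
      rw [hNset, Finset.mem_filter] at hi
      have h1 : ¬ h i < 0 := fun hc => hi ⟨Finset.mem_univ i, hc⟩
      linarith [hsign i]
    have hform : ∀ x ∈ Set.Iio (0:ℝ), F x = (∑ i ∈ Nset, g i) * Real.log (-x)
        + ((∑ i ∈ Nset, g i * Real.log (-(h i) + fs i * (-x)⁻¹))
          + ∑ i ∈ Finset.univ \ Nset, g i * Real.log (fs i)) := by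
      intro x hx
      rw [Set.mem_Iio] at hx
      rw [hF x, ← Finset.sum_sdiff (Finset.subset_univ Nset)]
      have hPart1 : ∑ i ∈ Finset.univ \ Nset, g i * Real.log (fs i + x * h i)
          = ∑ i ∈ Finset.univ \ Nset, g i * Real.log (fs i) := by
        refine Finset.sum_congr rfl fun i hi => ?_
        rw [hh0 i (Finset.mem_sdiff.1 hi).2, mul_zero, add_zero]
      have hPart2 : ∑ i ∈ Nset, g i * Real.log (fs i + x * h i)
          = (∑ i ∈ Nset, g i) * Real.log (-x)
            + ∑ i ∈ Nset, g i * Real.log (-(h i) + fs i * (-x)⁻¹) := by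
        rw [Finset.sum_mul, ← Finset.sum_add_distrib]
        refine Finset.sum_congr rfl fun i hi => ?_
        rw [hNset, Finset.mem_filter] at hi
        have hhi := hi.2
        have hxne : -x > 0 := by linarith
        have hin : 0 < -(h i) + fs i * (-x)⁻¹ := by
          have : 0 < fs i * (-x)⁻¹ := mul_pos (hfspos i) (inv_pos.2 hxne)
          linarith
        have heq : fs i + x * h i = (-x) * (-(h i) + fs i * (-x)⁻¹) := by
          have hxne0 : x ≠ 0 := ne_of_lt hx
          field_simp
          ring
        rw [heq, Real.log_mul (ne_of_gt hxne) (ne_of_gt hin)]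
        ring
      rw [hPart1, hPart2]
      ring
    have t2 : Tendsto (fun x : ℝ => (∑ i ∈ Nset, g i) * Real.log (-x)) atBot atTop :=
      Tendsto.const_mul_atTop hcN
        (Real.tendsto_log_atTop.comp tendsto_neg_atBot_atTop)
    have t3 : Tendsto (fun x : ℝ => (∑ i ∈ Nset, g i * Real.log (-(h i) + fs i * (-x)⁻¹))
        + ∑ i ∈ Finset.univ \ Nset, g i * Real.log (fs i)) atBot
        (𝓝 ((∑ i ∈ Nset, g i * Real.log (-(h i)))
          + ∑ i ∈ Finset.univ \ Nset, g i * Real.log (fs i))) := by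
      apply Tendsto.add_const
      apply tendsto_finset_sum
      intro i hi
      rw [hNset, Finset.mem_filter] at hi
      have hhi := hi.2
      have harg : Tendsto (fun x : ℝ => -(h i) + fs i * (-x)⁻¹) atBot (𝓝 (-(h i))) := by
        have h0 : Tendsto (fun x : ℝ => (-x)⁻¹) atBot (𝓝 0) :=
          tendsto_inv_atTop_zero.comp tendsto_neg_atBot_atTop
        have h1 : Tendsto (fun x : ℝ => fs i * (-x)⁻¹) atBot (𝓝 (fs i * 0)) :=
          h0.const_mul (fs i)
        rw [mul_zero] at h1
        have := h1.const_add (-(h i))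
        simpa using this
      exact ((Real.continuousAt_log (ne_of_gt (by linarith : (0:ℝ) < -(h i)))).tendsto.comp
        harg).const_mul (g i)
    refine Tendsto.congr' ?_ (Tendsto.atTop_add t2 t3)
    filter_upwards [Iio_mem_atBot (0:ℝ)] with x hx
    exact (hform x hx).symm
  have limA : BddAbove X → Tendsto F (𝓝[<] (sSup X)) atBot := by
    intro hB
    set b := sSup X with hb
    have hbnotX : b ∉ X := by
      intro hmem
      obtain ⟨ε, hε, hball⟩ := Metric.isOpen_iff.1 hXopen _ hmem
      have hmem2 : b + ε / 2 ∈ X := by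
        apply hball
        rw [Metric.mem_ball, Real.dist_eq, abs_of_nonneg (by linarith)]
        linarith
      have := le_csSup hB hmem2
      linarith
    have hb0 : 0 < b := by
      rcases lt_or_eq_of_le (le_csSup hB h0X) with h1 | h1
      · exact h1
      · exact absurd (show b ∈ X from by rw [hb, ← h1]; exact h0X) hbnotX
    have hIooX : Set.Ioo 0 b ⊆ X := by
      intro x hx
      obtain ⟨y, hyX, hyx⟩ := exists_lt_of_lt_csSup hXne hx.2
      exact hXord.out h0X hyX ⟨hx.1.le, hyx.le⟩
    have hfb : ∀ i, 0 ≤ fs i + b * h i := by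
      intro i
      by_contra hneg
      push_neg at hneg
      have hhi : h i < 0 := by nlinarith [hfspos i]
      set c := fs i + b * h i with hc
      set δ := min (c / (2 * h i)) (b / 2) with hδ
      have hδ1 : 0 < c / (2 * h i) := div_pos_of_neg_of_neg hneg (by linarith)
      have hδpos : 0 < δ := lt_min hδ1 (by linarith)
      have hδb : δ ≤ b / 2 := min_le_right _ _
      have hxmem : b - δ ∈ Set.Ioo 0 b := ⟨by linarith, by linarith⟩
      have hpos := (hXmem _).1 (hIooX hxmem) i
      have h1 : δ ≤ c / (2 * h i) := min_le_left _ _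
      have h2 : c / (2 * h i) * h i ≤ δ * h i :=
        mul_le_mul_of_nonpos_right h1 hhi.le
      have h3 : c / (2 * h i) * h i = c / 2 := by
        field_simp [hhi.ne]
      nlinarith [hpos]
    set V := Finset.univ.filter (fun i => fs i + b * h i = 0) with hV
    have hVne : V.Nonempty := by
      by_contra hemp
      rw [Finset.not_nonempty_iff_eq_empty, Finset.filter_eq_empty_iff] at hemp
      apply hbnotX
      rw [hXmem]
      intro i
      exact lt_of_le_of_ne (hfb i) (Ne.symm (hemp (Finset.mem_univ i)))
    have hcV : 0 < ∑ i ∈ V, g i := by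
      have hbc := aux_cV E a g fs h hoff hdet ha hfspos hEfs hEh b hfb hVne
      by_contra hle
      push_neg at hle
      nlinarith
    have hhV : ∀ i ∈ V, h i < 0 := by
      intro i hi
      have hzero := (Finset.mem_filter.1 hi).2
      nlinarith [hfspos i]
    have hform : ∀ x ∈ Set.Ioo 0 b, F x = (∑ i ∈ V, g i) * Real.log (b - x)
        + ((∑ i ∈ V, g i * Real.log (-(h i)))
          + ∑ i ∈ Finset.univ \ V, g i * Real.log (fs i + x * h i)) := by
      intro x hx
      rw [hF x, ← Finset.sum_sdiff (Finset.subset_univ V)]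
      have hVpart : ∑ i ∈ V, g i * Real.log (fs i + x * h i)
          = (∑ i ∈ V, g i) * Real.log (b - x) + ∑ i ∈ V, g i * Real.log (-(h i)) := by
        rw [Finset.sum_mul, ← Finset.sum_add_distrib]
        refine Finset.sum_congr rfl fun i hi => ?_
        have hzero := (Finset.mem_filter.1 hi).2
        have hhi := hhV i hi
        have heq : fs i + x * h i = (b - x) * (-(h i)) := by linear_combination hzero
        rw [heq, Real.log_mul (ne_of_gt (by linarith [hx.2])) (ne_of_gt (by linarith))]
        ring
      rw [hVpart]
      ring
    have t1 : Tendsto (fun x => b - x) (𝓝[<] b) (𝓝[>] 0) := by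
      apply tendsto_nhdsWithin_of_tendsto_nhds_of_eventually_within
      · have hc : Tendsto (fun x : ℝ => b - x) (𝓝 b) (𝓝 (b - b)) :=
          (continuous_const.sub continuous_id).tendsto b
        rw [sub_self] at hc
        exact hc.mono_left nhdsWithin_le_nhds
      · filter_upwards [eventually_mem_nhdsWithin] with x hx
        exact sub_pos.2 (Set.mem_Iio.1 hx)
    have t2 : Tendsto (fun x => (∑ i ∈ V, g i) * Real.log (b - x)) (𝓝[<] b) atBot :=
      Tendsto.const_mul_atBot hcV (Real.tendsto_log_nhdsGT_zero.comp t1)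
    have t3 : Tendsto (fun x => (∑ i ∈ V, g i * Real.log (-(h i)))
        + ∑ i ∈ Finset.univ \ V, g i * Real.log (fs i + x * h i)) (𝓝[<] b)
        (𝓝 ((∑ i ∈ V, g i * Real.log (-(h i)))
          + ∑ i ∈ Finset.univ \ V, g i * Real.log (fs i + b * h i))) := by
      apply Tendsto.const_add
      apply tendsto_finset_sum
      intro i hi
      have hiV : i ∉ V := (Finset.mem_sdiff.1 hi).2
      have hpos : 0 < fs i + b * h i := by
        refine lt_of_le_of_ne (hfb i) (Ne.symm fun hEq => hiV ?_)
        rw [hV, Finset.mem_filter]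
        exact ⟨Finset.mem_univ i, hEq⟩
      have haff : Tendsto (fun x : ℝ => fs i + x * h i) (𝓝[<] b) (𝓝 (fs i + b * h i)) :=
        ((continuous_const.add (continuous_id.mul continuous_const)).tendsto b).mono_left
          nhdsWithin_le_nhds
      exact ((Real.continuousAt_log (ne_of_gt hpos)).tendsto.comp haff).const_mul (g i)
    refine Tendsto.congr' ?_ (Tendsto.atBot_add t2 t3)
    filter_upwards [Ioo_mem_nhdsLT_of_mem ⟨hb0, le_refl b⟩] with x hx
    exact (hform x hx).symm
  have limNA : ¬ BddAbove X → Tendsto F atTop atBot := by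
    intro hB
    have hsign : ∀ i, 0 ≤ h i := by
      intro i
      by_contra hneg
      push_neg at hneg
      apply hB
      refine ⟨fs i / (-(h i)), ?_⟩
      intro x hxX
      have hp := (hXmem x).1 hxX i
      rw [le_div_iff₀ (by linarith)]
      nlinarith
    have hPne : (Finset.univ.filter (fun i => 0 < h i)).Nonempty := by
      by_contra hemp
      rw [Finset.not_nonempty_iff_eq_empty, Finset.filter_eq_empty_iff] at hemp
      apply hhne
      funext i
      have := hemp (Finset.mem_univ i)
      have := hsign i
      show h i = 0
      linarith
    have hcP := aux_cP E g h hoff hcol hdet hEh hsign hPne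
    set P := Finset.univ.filter (fun i => 0 < h i) with hP
    have hh0 : ∀ i, i ∉ P → h i = 0 := by
      intro i hi
      rw [hP, Finset.mem_filter] at hi
      have h1 : ¬ 0 < h i := fun hc => hi ⟨Finset.mem_univ i, hc⟩
      linarith [hsign i]
    have hform : ∀ x ∈ Set.Ioi (0:ℝ), F x = (∑ i ∈ P, g i) * Real.log x
        + ((∑ i ∈ P, g i * Real.log (h i + fs i * x⁻¹))
          + ∑ i ∈ Finset.univ \ P, g i * Real.log (fs i)) := by
      intro x hx
      rw [Set.mem_Ioi] at hx
      rw [hF x, ← Finset.sum_sdiff (Finset.subset_univ P)]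
      have hPart1 : ∑ i ∈ Finset.univ \ P, g i * Real.log (fs i + x * h i)
          = ∑ i ∈ Finset.univ \ P, g i * Real.log (fs i) := by
        refine Finset.sum_congr rfl fun i hi => ?_
        rw [hh0 i (Finset.mem_sdiff.1 hi).2, mul_zero, add_zero]
      have hPart2 : ∑ i ∈ P, g i * Real.log (fs i + x * h i)
          = (∑ i ∈ P, g i) * Real.log x + ∑ i ∈ P, g i * Real.log (h i + fs i * x⁻¹) := by
        rw [Finset.sum_mul, ← Finset.sum_add_distrib]
        refine Finset.sum_congr rfl fun i hi => ?_
        rw [hP, Finset.mem_filter] at hi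
        have hhi := hi.2
        have hin : 0 < h i + fs i * x⁻¹ := by
          have : 0 < fs i * x⁻¹ := mul_pos (hfspos i) (inv_pos.2 hx)
          linarith
        have heq : fs i + x * h i = x * (h i + fs i * x⁻¹) := by
          field_simp
          ring
        rw [heq, Real.log_mul (ne_of_gt hx) (ne_of_gt hin)]
        ring
      rw [hPart1, hPart2]
      ring
    have t2 : Tendsto (fun x : ℝ => (∑ i ∈ P, g i) * Real.log x) atTop atBot :=
      Tendsto.const_mul_atTop_of_neg hcP Real.tendsto_log_atTop
    have t3 : Tendsto (fun x : ℝ => (∑ i ∈ P, g i * Real.log (h i + fs i * x⁻¹))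
        + ∑ i ∈ Finset.univ \ P, g i * Real.log (fs i)) atTop
        (𝓝 ((∑ i ∈ P, g i * Real.log (h i)) + ∑ i ∈ Finset.univ \ P, g i * Real.log (fs i))) := by
      apply Tendsto.add_const
      apply tendsto_finset_sum
      intro i hi
      rw [hP, Finset.mem_filter] at hi
      have hhi := hi.2
      have harg : Tendsto (fun x : ℝ => h i + fs i * x⁻¹) atTop (𝓝 (h i)) := by
        have h1 : Tendsto (fun x : ℝ => fs i * x⁻¹) atTop (𝓝 (fs i * 0)) :=
          tendsto_inv_atTop_zero.const_mul (fs i)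
        rw [mul_zero] at h1
        have := h1.const_add (h i)
        simpa using this
      exact ((Real.continuousAt_log (ne_of_gt hhi)).tendsto.comp harg).const_mul (g i)
    refine Tendsto.congr' ?_ (Tendsto.atBot_add t2 t3)
    filter_upwards [Ioi_mem_atTop (0:ℝ)] with x hx
    exact (hform x hx).symm
  refine ⟨hanti, limB, limNB, limA, limNA, ?_⟩
  -- existence and uniqueness of the zero
  have hcont : ContinuousOn F X := fun x hx => (hFd x hx).continuousAt.continuousWithinAt
  -- find a point with F > 0
  have hx1 : ∃ x1 ∈ X, 0 < F x1 := by
    by_cases hB : BddBelow X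
    · have hlnotX : sInf X ∉ X := by
        intro hmem
        obtain ⟨ε, hε, hball⟩ := Metric.isOpen_iff.1 hXopen _ hmem
        have hmem2 : sInf X - ε / 2 ∈ X := by
          apply hball
          rw [Metric.mem_ball, Real.dist_eq]
          rw [abs_of_nonpos (by linarith)]
          linarith
        have := csInf_le hB hmem2
        linarith
      have hXmemF : X ∈ 𝓝[>] (sInf X) := by
        have hl0 : sInf X < 0 := by
          rcases lt_or_eq_of_le (csInf_le hB h0X) with h1 | h1
          · exact h1
          · exact absurd (h1 ▸ h0X) hlnotX
        have hsub : Set.Ioo (sInf X) 0 ⊆ X := by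
          intro x hx
          obtain ⟨y, hyX, hyx⟩ := exists_lt_of_csInf_lt hXne hx.1
          exact hXord.out hyX h0X ⟨hyx.le, hx.2.le⟩
        exact mem_of_superset (Ioo_mem_nhdsGT_of_mem ⟨le_refl _, hl0⟩) hsub
      have hev := (limB hB).eventually_gt_atTop 0
      obtain ⟨x1, hx1, hx1'⟩ := (hev.and hXmemF).exists
      exact ⟨x1, hx1', hx1⟩
    · have hsub : Set.Iio (0:ℝ) ⊆ X := by
        intro c hc
        obtain ⟨y, hyX, hyc⟩ := not_bddBelow_iff.1 hB c
        exact hXord.out hyX h0X ⟨hyc.le, le_of_lt hc⟩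
      have hXmemF : X ∈ (atBot : Filter ℝ) := mem_of_superset (Iio_mem_atBot 0) hsub
      have hev := (limNB hB).eventually_gt_atTop 0
      obtain ⟨x1, hx1, hx1'⟩ := (hev.and hXmemF).exists
      exact ⟨x1, hx1', hx1⟩
  have hx2 : ∃ x2 ∈ X, F x2 < 0 := by
    by_cases hB : BddAbove X
    · have hbnotX : sSup X ∉ X := by
        intro hmem
        obtain ⟨ε, hε, hball⟩ := Metric.isOpen_iff.1 hXopen _ hmem
        have hmem2 : sSup X + ε / 2 ∈ X := by
          apply hball
          rw [Metric.mem_ball, Real.dist_eq]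
          rw [abs_of_nonneg (by linarith)]
          linarith
        have := le_csSup hB hmem2
        linarith
      have hXmemF : X ∈ 𝓝[<] (sSup X) := by
        have hb0 : 0 < sSup X := by
          rcases lt_or_eq_of_le (le_csSup hB h0X) with h1 | h1
          · exact h1
          · exact absurd (h1.symm ▸ h0X) hbnotX
        have hsub : Set.Ioo 0 (sSup X) ⊆ X := by
          intro x hx
          obtain ⟨y, hyX, hyx⟩ := exists_lt_of_lt_csSup hXne hx.2
          exact hXord.out h0X hyX ⟨hx.1.le, hyx.le⟩
        exact mem_of_superset (Ioo_mem_nhdsLT_of_mem ⟨hb0, le_refl _⟩) hsub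
      have hev := (limA hB).eventually_lt_atBot 0
      obtain ⟨x2, hx2, hx2'⟩ := (hev.and hXmemF).exists
      exact ⟨x2, hx2', hx2⟩
    · have hsub : Set.Ioi (0:ℝ) ⊆ X := by
        intro c hc
        obtain ⟨y, hyX, hyc⟩ := not_bddAbove_iff.1 hB c
        exact hXord.out h0X hyX ⟨le_of_lt hc, hyc.le⟩
      have hXmemF : X ∈ (atTop : Filter ℝ) := mem_of_superset (Ioi_mem_atTop 0) hsub
      have hev := (limNA hB).eventually_lt_atBot 0
      obtain ⟨x2, hx2, hx2'⟩ := (hev.and hXmemF).exists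
      exact ⟨x2, hx2', hx2⟩
  obtain ⟨x1, hx1X, hx1pos⟩ := hx1
  obtain ⟨x2, hx2X, hx2neg⟩ := hx2
  have hx12 : x1 < x2 := by
    rcases lt_trichotomy x1 x2 with h1 | h1 | h1
    · exact h1
    · exfalso; rw [h1] at hx1pos; linarith
    · exfalso; have := hanti hx2X hx1X h1; linarith
  have hIccX : Set.Icc x1 x2 ⊆ X := fun t ht => hXord.out hx1X hx2X ht
  have hIVT := intermediate_value_Icc' hx12.le (hcont.mono hIccX)
  have h0mem : (0:ℝ) ∈ Set.Icc (F x2) (F x1) := ⟨hx2neg.le, hx1pos.le⟩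
  obtain ⟨x0, hx0I, hx0F⟩ := hIVT h0mem
  refine ⟨x0, ⟨hIccX hx0I, hx0F⟩, ?_⟩
  intro y ⟨hyX, hyF⟩
  by_contra hne
  rcases lt_or_gt_of_ne hne with h1 | h1
  · have := hanti hyX (hIccX hx0I) h1
    rw [hyF, hx0F] at this; exact lt_irrefl 0 this
  · have := hanti (hIccX hx0I) hyX h1
    rw [hyF, hx0F] at this; exact lt_irrefl 0 this
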